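/- Let C be a finite index set with n = |C| ≥ 2 and let b, τ be real numbers. Let h(b), H(b), H(τ) be real numbers with H(b) > H(τ), and for each c ∈ C let s_c, d_c, P_c be real numbers with s_c ≠ b, together with real numbers F_c(s_c), F_c(s̲_c), f_c(s_c) satisfying F_c(s_c) > F_c(s̲_c) and f_c(s_c) ≠ 0. Suppose the round-r truncated first-order-condition system holds: for every c ∈ C, 1/(s_c − b) = P_c + h(b)/(H(b) − H(τ)) + Σ_{j≠c} [ f_j(s_j)/(F_j(s_j) − F_j(s̲_j)) ] · d_j. Then for every c ∈ C, d_c = (1/(n − 1)) · [ (F_c(s_c) − F_c(s̲_c)) / f_c(s_c) ] · [ Σ_{j≠c} ( 1/(s_j − b) − P_j ) − (n − 2) · ( 1/(s_c − b) − P_c ) − h(b)/(H(b) − H(τ)) ]. -/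

import Mathlib

open Finset

/-- Round-r equilibrium ODE system of the multi-round negotiation extension.
Here `hb = h(b)`, `Hb = H(b)`, `Hτ = H(τ)` for the reserve distribution,
`s c = ψ_c(b)`, `d c = ψ_c'(b)`, `P c = p_c'(b)/p_c(b)`,
`Fs c = F_c(ψ_c(b))`, `Fl c = F_c(s̲_c)` and `fs c = f_c(ψ_c(b))`.
From the truncated first-order conditions we solve for the derivatives `d c`. -/
theorem stmt7 {ι : Type*} [DecidableEq ι] (C : Finset ι) (hn : 2 ≤ C.card)
    (b τ : ℝ) (hb Hb Hτ : ℝ) (hH : Hb > Hτ)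
    (s d P : ι → ℝ) (Fs Fl fs : ι → ℝ)
    (hs : ∀ c ∈ C, s c ≠ b)
    (hF : ∀ c ∈ C, Fs c > Fl c) (hf : ∀ c ∈ C, fs c ≠ 0)
    (hfoc : ∀ c ∈ C, 1 / (s c - b) =
      P c + hb / (Hb - Hτ) + ∑ j ∈ C.erase c, fs j / (Fs j - Fl j) * d j) :
    ∀ c ∈ C,
      d c = (1 / ((C.card : ℝ) - 1)) * ((Fs c - Fl c) / fs c) *
        ((∑ j ∈ C.erase c, (1 / (s j - b) - P j)) -
          ((C.card : ℝ) - 2) * (1 / (s c - b) - P c) - hb / (Hb - Hτ)) := by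
  set n : ℝ := (C.card : ℝ) with hn'
  have hn2 : (2 : ℝ) ≤ n := by rw [hn']; exact_mod_cast hn
  have hn1 : n - 1 ≠ 0 := by linarith
  set g : ι → ℝ := fun j => fs j / (Fs j - Fl j) * d j with hg
  set A : ι → ℝ := fun j => 1 / (s j - b) - P j - hb / (Hb - Hτ) with hA
  set S : ℝ := ∑ j ∈ C, g j with hS
  have key : ∀ c ∈ C, g c = S - A c := by
    intro c hc
    have h1 := hfoc c hc
    have h2 : ∑ j ∈ C.erase c, g j = S - g c :=
      Finset.sum_erase_eq_sub hc
    simp only [hA]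
    rw [h2] at h1
    linarith
  have hsum : ∑ c ∈ C, A c = (n - 1) * S := by
    have : S = ∑ c ∈ C, (S - A c) := by
      rw [hS]
      exact Finset.sum_congr rfl key
    rw [Finset.sum_sub_distrib, Finset.sum_const, nsmul_eq_mul] at this
    rw [hn']
    linarith
  intro c hc
  have hgc := key c hc
  have hAsum : ∑ j ∈ C.erase c, A j = ∑ j ∈ C, A j - A c :=
    Finset.sum_erase_eq_sub hc
  have herase : ∑ j ∈ C.erase c, (1 / (s j - b) - P j)
      = ∑ j ∈ C.erase c, A j + (n - 1) * (hb / (Hb - Hτ)) := by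
    have hcard : ((C.erase c).card : ℝ) = n - 1 := by
      rw [Finset.card_erase_of_mem hc, hn']
      have : 1 ≤ C.card := by omega
      push_cast [Nat.cast_sub this]
      ring
    have : ∑ j ∈ C.erase c, (1 / (s j - b) - P j)
        = ∑ j ∈ C.erase c, (A j + hb / (Hb - Hτ)) := by
      apply Finset.sum_congr rfl
      intro j _
      simp [hA]
    rw [this, Finset.sum_add_distrib, Finset.sum_const, nsmul_eq_mul, hcard]
  have hfc := hf c hc
  have hFc : Fs c - Fl c ≠ 0 := by have := hF c hc; linarith
  have hd : d c = (Fs c - Fl c) / fs c * g c := by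
    field_simp [hg]
    simp only [hg]
    rw [show (Fs c - Fl c) * (fs c / (Fs c - Fl c) * d c)
      = (Fs c - Fl c) / (Fs c - Fl c) * fs c * d c by ring, div_self hFc]
    ring
  rw [hd, hgc]
  have hScS : S = (∑ j ∈ C, A j) / (n - 1) := by
    field_simp [hsum]
    linarith [hsum]
  rw [hScS, herase, hAsum]
  have hAc : A c = 1 / (s c - b) - P c - hb / (Hb - Hτ) := rfl
  rw [hAc]
  field_simp
  ring
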